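/- The minimum of Δ_λ(f) over all f ∈ 𝓛(P_{X|S=0}) equals −√((λ₂a₁ + λ₄ρ_m b₁)² + (λ₂a₂)²). -/

import Mathlib

open Filter Topology

/-- Kullback–Leibler divergence between distributions on a finite set. -/
noncomputable def KLdiv {α : Type*} [Fintype α] (P Q : α → ℝ) : ℝ :=
  ∑ a, P a * Real.log (P a / Q a)

/-- The objective `L_λ` evaluated at the perturbed distribution
`P̃_{X|S=0}(x) = P0(x)(1+εf(x))`, with `P̃_{Y|S=0} = W ∘ P̃_{X|S=0}`.
At `ε = 0` this is `L_λ(P_{X|S=0})`. -/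
noncomputable def Lobj {𝒳 : Type*} [Fintype 𝒳]
    (P0 P1 : 𝒳 → ℝ) (W : 𝒳 → Bool → ℝ) (Q0 Q1 : Bool → ℝ)
    (l1 l2 l3 l4 : ℝ) (f : 𝒳 → ℝ) (ε : ℝ) : ℝ :=
  l1 * KLdiv (fun x => P0 x * (1 + ε * f x)) P0
    + l2 * KLdiv (fun x => P0 x * (1 + ε * f x)) P1
    + l3 * KLdiv (fun y => ∑ x, P0 x * (1 + ε * f x) * W x y) Q0
    + l4 * KLdiv (fun y => ∑ x, P0 x * (1 + ε * f x) * W x y) Q1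

lemma term_deriv (q h d : ℝ) (hq : 0 < q) (hd : 0 < d) :
    HasDerivAt (fun ε : ℝ => (q + ε * h) * Real.log ((q + ε * h) / d))
      (h * (Real.log (q / d) + 1)) 0 := by
  have h1 : HasDerivAt (fun ε : ℝ => q + ε * h) h 0 := by
    simpa using ((hasDerivAt_id (0:ℝ)).mul_const h).const_add q
  have h2 : HasDerivAt (fun ε : ℝ => (q + ε * h) / d) (h / d) 0 := h1.div_const d
  have h3 : HasDerivAt (fun ε : ℝ => Real.log ((q + ε * h) / d))
      ((h / d) / ((q + 0 * h) / d)) 0 := h2.log (by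
        simp only [zero_mul, add_zero]
        positivity)
  have h4 := h1.mul h3
  refine h4.congr_deriv ?_
  simp only [zero_mul, add_zero]
  field_simp

lemma Lobj_deriv {𝒳 : Type*} [Fintype 𝒳] (P0 P1 : 𝒳 → ℝ)
    (hP0pos : ∀ x, 0 < P0 x) (hP1pos : ∀ x, 0 < P1 x)
    (W : 𝒳 → Bool → ℝ) (Q0 Q1 : Bool → ℝ)
    (hQ0 : ∀ y, Q0 y = ∑ x, P0 x * W x y)
    (hQ0pos : ∀ y, 0 < Q0 y) (hQ1pos : ∀ y, 0 < Q1 y)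
    (l1 l2 l3 l4 : ℝ) (f : 𝒳 → ℝ) :
    HasDerivAt (fun ε => Lobj P0 P1 W Q0 Q1 l1 l2 l3 l4 f ε)
      (l1 * (∑ x, P0 x * f x * (Real.log (P0 x / P0 x) + 1))
       + l2 * (∑ x, P0 x * f x * (Real.log (P0 x / P1 x) + 1))
       + l3 * (∑ y, (∑ x, P0 x * f x * W x y) * (Real.log (Q0 y / Q0 y) + 1))
       + l4 * (∑ y, (∑ x, P0 x * f x * W x y) * (Real.log (Q0 y / Q1 y) + 1))) 0 := by
  have hx : ∀ (P : 𝒳 → ℝ), (∀ x, 0 < P x) → ∀ x : 𝒳,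
      HasDerivAt (fun ε : ℝ => P0 x * (1 + ε * f x) * Real.log (P0 x * (1 + ε * f x) / P x))
        (P0 x * f x * (Real.log (P0 x / P x) + 1)) 0 := by
    intro P hP x
    have heq : (fun ε : ℝ => P0 x * (1 + ε * f x) * Real.log (P0 x * (1 + ε * f x) / P x))
        = fun ε : ℝ => (P0 x + ε * (P0 x * f x)) * Real.log ((P0 x + ε * (P0 x * f x)) / P x) := by
      funext ε; ring_nf
    rw [heq]
    exact term_deriv _ _ _ (hP0pos x) (hP x)
  have hy : ∀ (Q : Bool → ℝ), (∀ y, 0 < Q y) → ∀ y : Bool,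
      HasDerivAt (fun ε : ℝ => (∑ x, P0 x * (1 + ε * f x) * W x y)
          * Real.log ((∑ x, P0 x * (1 + ε * f x) * W x y) / Q y))
        ((∑ x, P0 x * f x * W x y) * (Real.log (Q0 y / Q y) + 1)) 0 := by
    intro Q hQpos y
    have hsum : ∀ ε : ℝ, (∑ x, P0 x * (1 + ε * f x) * W x y)
        = Q0 y + ε * (∑ x, P0 x * f x * W x y) := by
      intro ε
      rw [hQ0 y, Finset.mul_sum, ← Finset.sum_add_distrib]
      exact Finset.sum_congr rfl fun x _ => by ring
    simp only [hsum]
    exact term_deriv _ _ _ (hQ0pos y) (hQpos y)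
  simp only [Lobj, KLdiv]
  exact ((((HasDerivAt.fun_sum (fun x _ => hx P0 hP0pos x)).const_mul l1).add
    ((HasDerivAt.fun_sum (fun x _ => hx P1 hP1pos x)).const_mul l2)).add
    ((HasDerivAt.fun_sum (fun y _ => hy Q0 hQ0pos y)).const_mul l3)).add
    ((HasDerivAt.fun_sum (fun y _ => hy Q1 hQ1pos y)).const_mul l4)

set_option maxHeartbeats 1000000 in
theorem stmt4
    {𝒳 : Type*} [Fintype 𝒳]
    (P0 P1 : 𝒳 → ℝ)
    (hP0pos : ∀ x, 0 < P0 x) (hP0sum : ∑ x, P0 x = 1)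
    (hP1pos : ∀ x, 0 < P1 x) (hP1sum : ∑ x, P1 x = 1)
    (W : 𝒳 → Bool → ℝ)
    (hWnn : ∀ x y, 0 ≤ W x y) (hWsum : ∀ x, W x false + W x true = 1)
    (Q0 Q1 : Bool → ℝ)
    (hQ0 : ∀ y, Q0 y = ∑ x, P0 x * W x y) (hQ1 : ∀ y, Q1 y = ∑ x, P1 x * W x y)
    (hQ0pos : ∀ y, 0 < Q0 y) (hQ1pos : ∀ y, 0 < Q1 y)
    (l1 l2 l3 l4 : ℝ)
    (hl1 : 0 ≤ l1) (hl2 : 0 ≤ l2) (hl3 : 0 ≤ l3) (hl4 : 0 ≤ l4)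
    (fl : 𝒳 → ℝ)
    (hfl : ∀ x, fl x = Real.log (P0 x / P1 x) - ∑ x', P0 x' * Real.log (P0 x' / P1 x'))
    (gl : Bool → ℝ)
    (hgl : ∀ y, gl y = Real.log (Q0 y / Q1 y) - ∑ y', Q0 y' * Real.log (Q0 y' / Q1 y'))
    (hp1 : Q0 true < 1)
    (gm : Bool → ℝ)
    (hgmf : gm false = Real.sqrt (Q0 true / (1 - Q0 true)))
    (hgmt : gm true = -Real.sqrt ((1 - Q0 true) / Q0 true))
    (ρm : ℝ)
    (hρm : ρm = Real.sqrt (∑ x, P0 x * (gm false * W x false + gm true * W x true) ^ 2))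
    (hρmpos : 0 < ρm)
    (fm : 𝒳 → ℝ)
    (hfm : ∀ x, fm x = (gm false * W x false + gm true * W x true) / ρm)
    (a1 a2 b1 : ℝ)
    (ha1 : a1 = ∑ x, P0 x * (fl x * fm x))
    (ha2 : a2 = Real.sqrt (∑ x, P0 x * (fl x - a1 * fm x) ^ 2))
    (hb1 : b1 = ∑ y, Q0 y * (gl y * gm y)) :
    IsLeast
      {D : ℝ | ∃ f : 𝒳 → ℝ,
        (∑ x, P0 x * f x = 0) ∧ (∑ x, P0 x * f x ^ 2 = 1) ∧
        Tendsto
          (fun ε : ℝ =>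
            (Lobj P0 P1 W Q0 Q1 l1 l2 l3 l4 f ε
              - Lobj P0 P1 W Q0 Q1 l1 l2 l3 l4 f 0) / ε)
          (nhdsWithin 0 (Set.Ioi 0)) (nhds D)}
      (-Real.sqrt ((l2 * a1 + l4 * ρm * b1) ^ 2 + (l2 * a2) ^ 2)) := by
  classical
  -- basic facts about Q0 on Bool
  have hq0sum : Q0 false + Q0 true = 1 := by
    rw [hQ0, hQ0, ← Finset.sum_add_distrib, ← hP0sum]
    exact Finset.sum_congr rfl fun x _ => by rw [← mul_add, hWsum x, mul_one]
  have hp : 0 < Q0 true := hQ0pos true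
  have hqq : 0 < Q0 false := hQ0pos false
  have h1p : 1 - Q0 true = Q0 false := by linarith
  set a := Real.sqrt (Q0 true) with ha_def
  set b := Real.sqrt (Q0 false) with hb_def
  have ha0 : 0 < a := Real.sqrt_pos.mpr hp
  have hb0 : 0 < b := Real.sqrt_pos.mpr hqq
  have hasq : a ^ 2 = Q0 true := Real.sq_sqrt hp.le
  have hbsq : b ^ 2 = Q0 false := Real.sq_sqrt hqq.le
  have hgmf' : gm false = a / b := by
    rw [hgmf, h1p, Real.sqrt_div hp.le]
  have hgmt' : gm true = -(b / a) := by
    rw [hgmt, h1p, Real.sqrt_div hqq.le]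
  -- gl has Q0-mean zero
  have hglm : Q0 false * gl false + Q0 true * gl true = 0 := by
    have hm : (∑ y', Q0 y' * Real.log (Q0 y' / Q1 y'))
        = Q0 true * Real.log (Q0 true / Q1 true) + Q0 false * Real.log (Q0 false / Q1 false) :=
      Fintype.sum_bool _
    rw [hgl, hgl, hm]
    linear_combination (-(Q0 true * Real.log (Q0 true / Q1 true)
      + Q0 false * Real.log (Q0 false / Q1 false))) * hq0sum
  -- b1 and gl = b1 • gm pointwise
  have hb1' : b1 = a * b * gl false - a * b * gl true := by
    rw [hb1, Fintype.sum_bool, hgmf', hgmt', ← hasq, ← hbsq]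
    field_simp
    ring
  have hglgm : ∀ y, gl y = b1 * gm y := by
    have hc : b ^ 2 * gl false + a ^ 2 * gl true = 0 := by
      rw [hasq, hbsq]; exact hglm
    have hab1 : b ^ 2 + a ^ 2 = 1 := by rw [hasq, hbsq]; exact hq0sum
    intro y
    cases y
    · rw [hgmf', hb1']
      field_simp
      linear_combination hc - gl false * hab1
    · rw [hgmt', hb1']
      field_simp
      linear_combination hc - gl true * hab1
  -- fm facts
  have hρmne : ρm ≠ 0 := ne_of_gt hρmpos
  have hρm2 : ρm ^ 2 = ∑ x, P0 x * (gm false * W x false + gm true * W x true) ^ 2 := by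
    rw [hρm]; exact Real.sq_sqrt (Finset.sum_nonneg fun x _ => mul_nonneg (hP0pos x).le (sq_nonneg _))
  have hgmsum : ∀ x, gm false * W x false + gm true * W x true = ρm * fm x := by
    intro x; rw [hfm]; field_simp
  have hfm2 : ∑ x, P0 x * fm x ^ 2 = 1 := by
    have h1 : (∑ x, P0 x * (gm false * W x false + gm true * W x true) ^ 2)
        = ρm ^ 2 * ∑ x, P0 x * fm x ^ 2 := by
      rw [Finset.mul_sum]
      exact Finset.sum_congr rfl fun x _ => by rw [hgmsum x]; ring
    have h2 : ρm ^ 2 * 1 = ρm ^ 2 * ∑ x, P0 x * fm x ^ 2 := by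
      rw [mul_one, ← h1, ← hρm2]
    exact (mul_left_cancel₀ (pow_ne_zero 2 hρmne) h2).symm
  have hQ0gm : ∑ x, P0 x * (gm false * W x false + gm true * W x true) = 0 := by
    have h1 : ∑ x, P0 x * (gm false * W x false + gm true * W x true)
        = gm false * Q0 false + gm true * Q0 true := by
      rw [hQ0 false, hQ0 true, Finset.mul_sum, Finset.mul_sum, ← Finset.sum_add_distrib]
      exact Finset.sum_congr rfl fun x _ => by ring
    rw [h1, hgmf', hgmt', ← hasq, ← hbsq]
    field_simp
    ring
  have hfm0 : ∑ x, P0 x * fm x = 0 := by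
    have h1 : ∑ x, P0 x * fm x
        = (∑ x, P0 x * (gm false * W x false + gm true * W x true)) / ρm := by
      rw [Finset.sum_div]
      exact Finset.sum_congr rfl fun x _ => by rw [hfm]; ring
    rw [h1, hQ0gm, zero_div]
  have hfl0 : ∑ x, P0 x * fl x = 0 := by
    have h1 : ∑ x, P0 x * fl x
        = (∑ x, P0 x * Real.log (P0 x / P1 x))
          - (∑ x, P0 x) * (∑ x', P0 x' * Real.log (P0 x' / P1 x')) := by
      rw [Finset.sum_mul, ← Finset.sum_sub_distrib]
      exact Finset.sum_congr rfl fun x _ => by rw [hfl]; ring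
    rw [h1, hP0sum, one_mul, sub_self]
  have ha2sq : a2 ^ 2 = ∑ x, P0 x * (fl x - a1 * fm x) ^ 2 := by
    rw [ha2]; exact Real.sq_sqrt (Finset.sum_nonneg fun x _ => mul_nonneg (hP0pos x).le (sq_nonneg _))
  have hfl2 : ∑ x, P0 x * fl x ^ 2 = a1 ^ 2 + a2 ^ 2 := by
    have h1 : ∑ x, P0 x * (fl x - a1 * fm x) ^ 2
        = (∑ x, P0 x * fl x ^ 2) - 2 * a1 * (∑ x, P0 x * (fl x * fm x))
          + a1 ^ 2 * (∑ x, P0 x * fm x ^ 2) := by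
      rw [Finset.mul_sum, Finset.mul_sum, ← Finset.sum_sub_distrib, ← Finset.sum_add_distrib]
      exact Finset.sum_congr rfl fun x _ => by ring
    rw [← ha1, hfm2] at h1
    rw [← ha2sq] at h1
    linear_combination -h1
  set K := l4 * ρm * b1 with hK
  set w : 𝒳 → ℝ := fun x => l2 * fl x + K * fm x with hw
  set T := (l2 * a1 + l4 * ρm * b1) ^ 2 + (l2 * a2) ^ 2 with hT
  have hTnn : 0 ≤ T := by positivity
  have hw0 : ∑ x, P0 x * w x = 0 := by
    have h1 : ∑ x, P0 x * w x
        = l2 * (∑ x, P0 x * fl x) + K * (∑ x, P0 x * fm x) := by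
      rw [Finset.mul_sum, Finset.mul_sum, ← Finset.sum_add_distrib]
      exact Finset.sum_congr rfl fun x _ => by simp only [hw]; ring
    rw [h1, hfl0, hfm0]; ring
  have hw2 : ∑ x, P0 x * w x ^ 2 = T := by
    have h1 : ∑ x, P0 x * w x ^ 2
        = l2 ^ 2 * (∑ x, P0 x * fl x ^ 2) + 2 * l2 * K * (∑ x, P0 x * (fl x * fm x))
          + K ^ 2 * (∑ x, P0 x * fm x ^ 2) := by
      rw [Finset.mul_sum, Finset.mul_sum, Finset.mul_sum,
        ← Finset.sum_add_distrib, ← Finset.sum_add_distrib]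
      exact Finset.sum_congr rfl fun x _ => by simp only [hw]; ring
    rw [h1, hfl2, ← ha1, hfm2, hT, hK]; ring
  -- derivative value identity
  have hDval : ∀ f : 𝒳 → ℝ, (∑ x, P0 x * f x = 0) →
      (l1 * (∑ x, P0 x * f x * (Real.log (P0 x / P0 x) + 1))
       + l2 * (∑ x, P0 x * f x * (Real.log (P0 x / P1 x) + 1))
       + l3 * (∑ y, (∑ x, P0 x * f x * W x y) * (Real.log (Q0 y / Q0 y) + 1))
       + l4 * (∑ y, (∑ x, P0 x * f x * W x y) * (Real.log (Q0 y / Q1 y) + 1)))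
      = ∑ x, P0 x * f x * w x := by
    intro f hm
    have hS1 : (∑ x, P0 x * f x * (Real.log (P0 x / P0 x) + 1)) = 0 := by
      rw [Finset.sum_congr rfl (fun x _ => by
        rw [div_self (hP0pos x).ne', Real.log_one, zero_add, mul_one] :
          ∀ x ∈ Finset.univ, P0 x * f x * (Real.log (P0 x / P0 x) + 1) = P0 x * f x)]
      exact hm
    have hsumh : (∑ x, P0 x * f x * W x true) + (∑ x, P0 x * f x * W x false) = 0 := by
      rw [← Finset.sum_add_distrib, ← hm]
      exact Finset.sum_congr rfl fun x _ => by
        rw [show P0 x * f x * W x true + P0 x * f x * W x false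
          = P0 x * f x * (W x false + W x true) by ring, hWsum x, mul_one]
    have hS3 : (∑ y, (∑ x, P0 x * f x * W x y) * (Real.log (Q0 y / Q0 y) + 1)) = 0 := by
      have h1 : ∀ y : Bool, Real.log (Q0 y / Q0 y) + 1 = 1 := fun y => by
        rw [div_self (hQ0pos y).ne', Real.log_one, zero_add]
      simp only [h1, mul_one]
      rw [Fintype.sum_bool]
      exact hsumh
    have hS2 : (∑ x, P0 x * f x * (Real.log (P0 x / P1 x) + 1))
        = ∑ x, P0 x * f x * fl x := by
      have h1 : ∑ x, P0 x * f x * (Real.log (P0 x / P1 x) + 1)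
          = ∑ x, (P0 x * f x * fl x
            + (P0 x * f x) * ((∑ x', P0 x' * Real.log (P0 x' / P1 x')) + 1)) :=
        Finset.sum_congr rfl fun x _ => by rw [hfl x]; ring
      rw [h1, Finset.sum_add_distrib, ← Finset.sum_mul, hm, zero_mul, add_zero]
    have hS4 : (∑ y, (∑ x, P0 x * f x * W x y) * (Real.log (Q0 y / Q1 y) + 1))
        = b1 * ρm * (∑ x, P0 x * f x * fm x) := by
      have hlog : ∀ y, Real.log (Q0 y / Q1 y)
          = b1 * gm y + (∑ y', Q0 y' * Real.log (Q0 y' / Q1 y')) := fun y => by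
        rw [← hglgm y, hgl y]; ring
      rw [Fintype.sum_bool, hlog true, hlog false]
      have hkey : (∑ x, P0 x * f x * W x true) * gm true
          + (∑ x, P0 x * f x * W x false) * gm false
          = ρm * (∑ x, P0 x * f x * fm x) := by
        rw [Finset.sum_mul, Finset.sum_mul, ← Finset.sum_add_distrib, Finset.mul_sum]
        exact Finset.sum_congr rfl fun x _ => by
          rw [show P0 x * f x * W x true * gm true + P0 x * f x * W x false * gm false
            = P0 x * f x * (gm false * W x false + gm true * W x true) by ring, hgmsum x]
          ring
      linear_combination b1 * hkey
        + ((∑ y', Q0 y' * Real.log (Q0 y' / Q1 y')) + 1) * hsumh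
    rw [hS1, hS2, hS3, hS4]
    have h2 : ∑ x, P0 x * f x * w x
        = l2 * (∑ x, P0 x * f x * fl x) + K * (∑ x, P0 x * f x * fm x) := by
      rw [Finset.mul_sum, Finset.mul_sum, ← Finset.sum_add_distrib]
      exact Finset.sum_congr rfl fun x _ => by simp only [hw]; ring
    rw [h2, hK]; ring
  -- the limit of the difference quotient
  have hTend : ∀ f : 𝒳 → ℝ, (∑ x, P0 x * f x = 0) →
      Tendsto (fun ε : ℝ =>
          (Lobj P0 P1 W Q0 Q1 l1 l2 l3 l4 f ε - Lobj P0 P1 W Q0 Q1 l1 l2 l3 l4 f 0) / ε)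
        (nhdsWithin 0 (Set.Ioi 0)) (nhds (∑ x, P0 x * f x * w x)) := by
    intro f hm
    have hd := Lobj_deriv P0 P1 hP0pos hP1pos W Q0 Q1 hQ0 hQ0pos hQ1pos l1 l2 l3 l4 f
    rw [hDval f hm] at hd
    have h2 := hasDerivAt_iff_tendsto_slope.mp hd
    have h3 : nhdsWithin (0:ℝ) (Set.Ioi 0) ≤ nhdsWithin 0 {(0:ℝ)}ᶜ :=
      nhdsWithin_mono 0 (fun x hx => Set.mem_compl_singleton_iff.mpr (ne_of_gt hx))
    have h4 := h2.mono_left h3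
    have h5 : (fun ε : ℝ =>
        (Lobj P0 P1 W Q0 Q1 l1 l2 l3 l4 f ε - Lobj P0 P1 W Q0 Q1 l1 l2 l3 l4 f 0) / ε)
        = slope (fun ε => Lobj P0 P1 W Q0 Q1 l1 l2 l3 l4 f ε) 0 := by
      funext ε
      rw [slope_def_field, sub_zero]
    rw [h5]
    exact h4
  -- Cauchy–Schwarz
  have hCS : ∀ f : 𝒳 → ℝ, (∑ x, P0 x * f x ^ 2 = 1) →
      (∑ x, P0 x * f x * w x) ^ 2 ≤ T := by
    intro f hv
    have h := Finset.sum_mul_sq_le_sq_mul_sq Finset.univ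
      (fun x => Real.sqrt (P0 x) * f x) (fun x => Real.sqrt (P0 x) * w x)
    have e1 : ∑ x, (Real.sqrt (P0 x) * f x) * (Real.sqrt (P0 x) * w x)
        = ∑ x, P0 x * f x * w x :=
      Finset.sum_congr rfl fun x _ => by
        rw [show (Real.sqrt (P0 x) * f x) * (Real.sqrt (P0 x) * w x)
          = (Real.sqrt (P0 x) * Real.sqrt (P0 x)) * (f x * w x) by ring,
          Real.mul_self_sqrt (hP0pos x).le]
        ring
    have e2 : ∑ x, (Real.sqrt (P0 x) * f x) ^ 2 = ∑ x, P0 x * f x ^ 2 :=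
      Finset.sum_congr rfl fun x _ => by rw [mul_pow, Real.sq_sqrt (hP0pos x).le]
    have e3 : ∑ x, (Real.sqrt (P0 x) * w x) ^ 2 = ∑ x, P0 x * w x ^ 2 :=
      Finset.sum_congr rfl fun x _ => by rw [mul_pow, Real.sq_sqrt (hP0pos x).le]
    rw [e1, e2, e3, hv, hw2, one_mul] at h
    exact h
  constructor
  · -- membership
    rcases eq_or_lt_of_le hTnn with hT0 | hTpos
    · refine ⟨fm, hfm0, hfm2, ?_⟩
      have h := hCS fm hfm2
      rw [← hT0] at h
      have hz : (∑ x, P0 x * fm x * w x) = 0 := by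
        have h0 : (∑ x, P0 x * fm x * w x) ^ 2 = 0 := le_antisymm h (sq_nonneg _)
        exact pow_eq_zero_iff two_ne_zero |>.mp h0
      have h6 := hTend fm hfm0
      rw [hz] at h6
      rw [← hT0, Real.sqrt_zero, neg_zero]
      exact h6
    · set N := Real.sqrt T with hN
      have hNpos : 0 < N := Real.sqrt_pos.mpr hTpos
      have hN2 : N ^ 2 = T := Real.sq_sqrt hTnn
      have hm0 : ∑ x, P0 x * (-(w x) / N) = 0 := by
        have h1 : ∑ x, P0 x * (-(w x) / N) = (-(1 / N)) * ∑ x, P0 x * w x := by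
          rw [Finset.mul_sum]
          exact Finset.sum_congr rfl fun x _ => by ring
        rw [h1, hw0, mul_zero]
      have hv1 : ∑ x, P0 x * (-(w x) / N) ^ 2 = 1 := by
        have h1 : ∑ x, P0 x * (-(w x) / N) ^ 2 = (1 / N ^ 2) * ∑ x, P0 x * w x ^ 2 := by
          rw [Finset.mul_sum]
          exact Finset.sum_congr rfl fun x _ => by ring
        rw [h1, hw2, ← hN2]
        field_simp
      refine ⟨fun x => -(w x) / N, hm0, hv1, ?_⟩
      have hval : (∑ x, P0 x * (-(w x) / N) * w x) = -N := by
        have h1 : ∑ x, P0 x * (-(w x) / N) * w x = (-(1 / N)) * ∑ x, P0 x * w x ^ 2 := by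
          rw [Finset.mul_sum]
          exact Finset.sum_congr rfl fun x _ => by ring
        rw [h1, hw2, ← hN2]
        field_simp
      have h6 := hTend _ hm0
      rw [hval] at h6
      exact h6
  · rintro D ⟨f, hm, hv, hlim⟩
    have hD : D = ∑ x, P0 x * f x * w x := tendsto_nhds_unique hlim (hTend f hm)
    have hcs := hCS f hv
    rw [hD]
    have habs : |∑ x, P0 x * f x * w x| ≤ Real.sqrt T := by
      rw [← Real.sqrt_sq_eq_abs]
      exact Real.sqrt_le_sqrt hcs
    linarith [neg_abs_le (∑ x, P0 x * f x * w x)]
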